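/- In ℝ^{p,q} with p,q ≥ 2, the open cone U_S = {v : q(v) > 0} is locally connected relative to ℝⁿ: every point x in the closure of U_S (including points on the isotropic cone {q = 0}) has a fundamental system of neighborhoods V such that V ∩ U_S is connected. The same holds for U_T = {q < 0}. -/

import Mathlib

open Topology Metric Set Pointwise

section Key

variable {E F : Type*} [NormedAddCommGroup E] [NormedSpace ℝ E]
  [NormedAddCommGroup F] [NormedSpace ℝ F]

/-- Main geometric lemma: near a point `x` with `‖x.1‖ ≤ ‖x.2‖`, there are arbitrarily
small open neighborhoods whose intersection with `{‖v.1‖ < ‖v.2‖}` is connected. -/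
lemma key_lemma (hF : IsConnected (sphere (0:F) 1)) (x : E × F) (hx : ‖x.1‖ ≤ ‖x.2‖)
    {r : ℝ} (hr0 : 0 < r) (hr2 : x.2 = 0 ∨ r ≤ ‖x.2‖) :
    ∃ V : Set (E × F), IsOpen V ∧ x ∈ V ∧
      (∀ v ∈ V, ‖v.1 - x.1‖ < 3 * r ∧ ‖v.2 - x.2‖ < 3 * r) ∧
      IsConnected (V ∩ {v : E × F | ‖v.1‖ < ‖v.2‖}) := by
  set c := ‖x.2‖ with hc
  have hc0 : 0 ≤ c := norm_nonneg _
  -- the open cone over the ball around `x.2`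
  set C : Set F := ⋃ t ∈ Ioi (0:ℝ), (t • ball x.2 r : Set F) with hCdef
  have hCopen : IsOpen C := isOpen_biUnion fun t ht => isOpen_ball.smul₀ (ne_of_gt ht)
  have hCmem : ∀ {b : F}, b ∈ C ↔ ∃ t : ℝ, 0 < t ∧ ∃ b' ∈ ball x.2 r, t • b' = b := by
    intro b
    simp only [hCdef, mem_iUnion, mem_Ioi, exists_prop, mem_smul_set]
  -- the neighborhood V
  set V : Set (E × F) :=
    (Prod.fst ⁻¹' ball x.1 r) ∩ ((fun v : E × F => ‖v.2‖) ⁻¹' Ioo (c - r) (c + r)) ∩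
      (Prod.snd ⁻¹' C) with hVdef
  have hVopen : IsOpen V := by
    refine ((isOpen_ball.preimage continuous_fst).inter
      (isOpen_Ioo.preimage (continuous_norm.comp continuous_snd))).inter
      (hCopen.preimage continuous_snd)
  have hxV : x ∈ V := by
    refine ⟨⟨mem_ball_self hr0, ?_⟩, ?_⟩
    · exact ⟨by simp [hc]; linarith, by simp [hc]; linarith⟩
    · exact hCmem.2 ⟨1, one_pos, x.2, mem_ball_self hr0, one_smul _ _⟩
  have hVsmall : ∀ v ∈ V, ‖v.1 - x.1‖ < 3 * r ∧ ‖v.2 - x.2‖ < 3 * r := by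
    rintro v ⟨⟨h1, h2⟩, h3⟩
    constructor
    · have := mem_ball_iff_norm.1 h1
      linarith
    · obtain ⟨t, ht, b', hb', hb'eq⟩ := hCmem.1 h3
      have hb'1 : ‖b' - x.2‖ < r := mem_ball_iff_norm.1 hb'
      have hb'2 : c - r < ‖b'‖ ∧ ‖b'‖ < c + r := by
        constructor
        · have := norm_sub_norm_le x.2 b'
          rw [norm_sub_rev] at hb'1
          linarith
        · have := norm_sub_norm_le b' x.2
          linarith
      have hv2 : c - r < ‖v.2‖ ∧ ‖v.2‖ < c + r := h2
      have hdiff : ‖v.2 - b'‖ = |‖v.2‖ - ‖b'‖| := by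
        have e1 : v.2 - b' = (t - 1) • b' := by rw [← hb'eq, sub_smul, one_smul]
        have e2 : ‖v.2‖ = t * ‖b'‖ := by
          rw [← hb'eq, norm_smul, Real.norm_eq_abs, abs_of_pos ht]
        rw [e1, norm_smul, Real.norm_eq_abs, e2,
          show t * ‖b'‖ - ‖b'‖ = (t - 1) * ‖b'‖ from by ring, abs_mul, abs_norm]
      have : ‖v.2 - x.2‖ ≤ ‖v.2 - b'‖ + ‖b' - x.2‖ := norm_sub_le_norm_sub_add_norm_sub _ _ _
      have habs : |‖v.2‖ - ‖b'‖| < 2 * r := by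
        rw [abs_sub_lt_iff]; constructor <;> linarith
      rw [hdiff] at this
      linarith
  -- the scaling functions
  set m : E → ℝ := fun u => max ‖u‖ (c - r) with hm
  have hmcont : Continuous m := continuous_norm.max continuous_const
  have hmlt : ∀ u : E, u ∈ ball x.1 r → m u < c + r := by
    intro u hu
    have : ‖u‖ ≤ ‖x.1‖ + ‖u - x.1‖ := by
      have := norm_add_le (u - x.1) x.1; simpa [sub_add_cancel, add_comm] using this
    have h2 : ‖u - x.1‖ < r := mem_ball_iff_norm.1 hu
    refine max_lt (by linarith) (by linarith)
  have hm0 : ∀ u : E, 0 ≤ m u := fun u => le_trans (norm_nonneg u) (le_max_left _ _)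
  -- the parametrizing map
  set Φ : E × F × ℝ → E × F :=
    fun z => (z.1, (m z.1 + z.2.2 * (c + r - m z.1)) • z.2.1) with hΦ
  have hΦcont : Continuous Φ := by
    refine continuous_fst.prodMk (Continuous.smul ?_ (continuous_fst.comp continuous_snd))
    exact ((hmcont.comp continuous_fst).add
      ((continuous_snd.comp continuous_snd).mul
        (continuous_const.sub (hmcont.comp continuous_fst))))
  -- the set of admissible directions
  set S : Set F := {w | ‖w‖ = 1 ∧ ∃ t : ℝ, 0 < t ∧ t • w ∈ ball x.2 r} with hS
  have hSconn : IsConnected S := by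
    rcases hr2 with h0 | hrc
    · -- x.2 = 0 : S is the whole unit sphere
      have : S = sphere (0:F) 1 := by
        ext w
        simp only [hS, mem_setOf_eq, mem_sphere_iff_norm, sub_zero]
        constructor
        · rintro ⟨h, -⟩; exact h
        · intro h
          refine ⟨h, r/2, by linarith, ?_⟩
          rw [h0, mem_ball_zero_iff, norm_smul, Real.norm_eq_abs, h,
            abs_of_pos (by linarith : (0:ℝ) < r/2)]
          linarith
      rw [this]; exact hF
    · -- x.2 ≠ 0 : S is the radial projection of the ball around x.2
      have hcr : 0 < c := lt_of_lt_of_le hr0 hrc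
      have hne : ∀ b' ∈ ball x.2 r, b' ≠ 0 := by
        intro b' hb' h0
        rw [h0, mem_ball, dist_zero_left] at hb'
        linarith
      have hSeq : S = (fun b : F => ‖b‖⁻¹ • b) '' ball x.2 r := by
        ext w
        constructor
        · rintro ⟨hw1, t, ht, htw⟩
          refine ⟨t • w, htw, ?_⟩
          show ‖t • w‖⁻¹ • t • w = w
          rw [norm_smul, Real.norm_eq_abs, abs_of_pos ht, hw1, mul_one, smul_smul,
            inv_mul_cancel₀ (ne_of_gt ht), one_smul]
        · rintro ⟨b', hb', rfl⟩
          show ‖b'‖⁻¹ • b' ∈ S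
          have hb0 : b' ≠ 0 := hne b' hb'
          have hnb : (0:ℝ) < ‖b'‖ := norm_pos_iff.2 hb0
          constructor
          · rw [norm_smul, Real.norm_eq_abs, abs_of_pos (inv_pos.2 hnb),
              inv_mul_cancel₀ (ne_of_gt hnb)]
          · exact ⟨‖b'‖, hnb, by rwa [smul_smul, mul_inv_cancel₀ (ne_of_gt hnb), one_smul]⟩
      rw [hSeq]
      refine IsConnected.image ⟨⟨x.2, mem_ball_self hr0⟩, (convex_ball _ _).isPreconnected⟩ _ ?_
      refine ContinuousOn.smul (ContinuousOn.inv₀ continuous_norm.continuousOn ?_)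
        continuousOn_id
      intro b hb
      exact norm_ne_zero_iff.2 (hne b hb)
  -- the parameter domain
  set D : Set (E × F × ℝ) := (ball x.1 r) ×ˢ (S ×ˢ (Ioo (0:ℝ) 1)) with hD
  have hDconn : IsConnected D := by
    refine IsConnected.prod ⟨⟨x.1, mem_ball_self hr0⟩, (convex_ball _ _).isPreconnected⟩ ?_
    exact hSconn.prod ⟨⟨1/2, by norm_num⟩, isPreconnected_Ioo⟩
  -- the image identity
  have himg : Φ '' D = V ∩ {v : E × F | ‖v.1‖ < ‖v.2‖} := by
    ext v
    constructor
    · rintro ⟨⟨u, w, s⟩, ⟨hu, hw, hs⟩, rfl⟩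
      obtain ⟨hw1, t, ht, htw⟩ := hw
      obtain ⟨hs0, hs1⟩ := hs
      have hmu : m u < c + r := hmlt u hu
      set σ := m u + s * (c + r - m u) with hσ
      have hσ1 : m u < σ := by nlinarith
      have hσ2 : σ < c + r := by nlinarith
      have hσ0 : 0 < σ := lt_of_le_of_lt (hm0 u) hσ1
      have hnσw : ‖σ • w‖ = σ := by
        rw [norm_smul, Real.norm_eq_abs, abs_of_pos hσ0, hw1, mul_one]
      have hcone : σ • w ∈ C := by
        refine hCmem.2 ⟨σ / t, div_pos hσ0 ht, t • w, htw, ?_⟩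
        rw [smul_smul, div_mul_cancel₀ _ (ne_of_gt ht)]
      refine ⟨⟨⟨hu, ?_⟩, hcone⟩, ?_⟩
      · simp only [mem_preimage, mem_Ioo]
        constructor
        · rw [hnσw]; exact lt_of_le_of_lt (le_max_right _ _) hσ1
        · rw [hnσw]; exact hσ2
      · show ‖u‖ < ‖σ • w‖
        rw [hnσw]
        exact lt_of_le_of_lt (le_max_left _ _) hσ1
    · rintro ⟨⟨⟨ha, hb⟩, hcone⟩, hlt⟩
      simp only [mem_preimage, mem_Ioo] at ha hb hcone
      simp only [mem_setOf_eq] at hlt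
      obtain ⟨t, ht, b', hb', hb'eq⟩ := hCmem.1 hcone
      have hσ0 : 0 < ‖v.2‖ := lt_of_le_of_lt (norm_nonneg _) hlt
      set w : F := ‖v.2‖⁻¹ • v.2 with hw
      have hw1 : ‖w‖ = 1 := by
        rw [hw, norm_smul, Real.norm_eq_abs, abs_of_pos (inv_pos.2 hσ0),
          inv_mul_cancel₀ (ne_of_gt hσ0)]
      have hwS : w ∈ S := by
        refine ⟨hw1, ‖v.2‖ / t, div_pos hσ0 ht, ?_⟩
        have : (‖v.2‖ / t) • w = (1/t) • v.2 := by
          rw [hw, smul_smul]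
          congr 1
          field_simp
        rw [this, ← hb'eq, smul_smul, one_div, inv_mul_cancel₀ (ne_of_gt ht), one_smul]
        exact hb'
      have hmv : m v.1 < ‖v.2‖ := max_lt hlt hb.1
      have hmcr : m v.1 < c + r := hmlt v.1 ha
      set s := (‖v.2‖ - m v.1) / (c + r - m v.1) with hs
      have hden : 0 < c + r - m v.1 := by linarith
      have hs0 : 0 < s := div_pos (by linarith) hden
      have hs1 : s < 1 := (div_lt_one hden).2 (by linarith [hb.2])
      refine ⟨(v.1, w, s), ⟨ha, hwS, hs0, hs1⟩, ?_⟩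
      have hσeq : m v.1 + s * (c + r - m v.1) = ‖v.2‖ := by
        rw [hs, div_mul_cancel₀ _ (ne_of_gt hden)]; ring
      simp only [hΦ, hσeq]
      rw [hw, smul_smul, mul_inv_cancel₀ (ne_of_gt hσ0), one_smul]
  refine ⟨V, hVopen, hxV, hVsmall, ?_⟩
  rw [← himg]
  exact hDconn.image Φ hΦcont.continuousOn

/-- Transfer lemma: pull back the key lemma along a homeomorphism-like pair. -/
lemma transfer_lemma {X : Type*} [TopologicalSpace X]
    (hF : IsConnected (sphere (0:F) 1))
    (g : X → E × F) (g' : E × F → X) (hg : Continuous g) (hg' : Continuous g')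
    (h1 : ∀ v, g' (g v) = v) (h2 : ∀ z, g (g' z) = z)
    (x : X) (hx : ‖(g x).1‖ ≤ ‖(g x).2‖) (W : Set X)
    (hsmall : ∃ ε > 0, ∀ v : X, ‖(g v).1 - (g x).1‖ < ε → ‖(g v).2 - (g x).2‖ < ε → v ∈ W) :
    ∃ V ∈ 𝓝 x, V ⊆ W ∧ IsConnected (V ∩ g ⁻¹' {z : E × F | ‖z.1‖ < ‖z.2‖}) := by
  obtain ⟨ε, hε, hW⟩ := hsmall
  -- choose r
  have hr : ∃ r : ℝ, 0 < r ∧ 3 * r ≤ ε ∧ ((g x).2 = 0 ∨ r ≤ ‖(g x).2‖) := by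
    rcases eq_or_ne (g x).2 0 with h0 | h0
    · exact ⟨ε/3, by linarith, by linarith, Or.inl h0⟩
    · refine ⟨min (ε/3) ‖(g x).2‖, ?_, ?_, Or.inr (min_le_right _ _)⟩
      · exact lt_min (by linarith) (norm_pos_iff.2 h0)
      · have := min_le_left (ε/3) ‖(g x).2‖; linarith
  obtain ⟨r, hr0, hrε, hr2⟩ := hr
  obtain ⟨V, hVopen, hxV, hVsmall, hVconn⟩ := key_lemma hF (g x) hx hr0 hr2
  refine ⟨g ⁻¹' V, (hVopen.preimage hg).mem_nhds (by simpa using hxV), ?_, ?_⟩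
  · intro v hv
    obtain ⟨hb1, hb2⟩ := hVsmall (g v) hv
    exact hW v (by linarith) (by linarith)
  · have heq : g ⁻¹' V ∩ g ⁻¹' {z : E × F | ‖z.1‖ < ‖z.2‖} =
        g' '' (V ∩ {z : E × F | ‖z.1‖ < ‖z.2‖}) := by
      ext v
      constructor
      · rintro ⟨hv1, hv2⟩
        exact ⟨g v, ⟨hv1, hv2⟩, h1 v⟩
      · rintro ⟨z, hz, rfl⟩
        refine ⟨?_, ?_⟩ <;> simp only [mem_preimage, h2 z]
        exacts [hz.1, hz.2]
    rw [heq]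
    exact hVconn.image g' hg'.continuousOn

end Key

section Pi

/-- Coordinate bound in Euclidean space. -/
lemma coord_le_norm {k : ℕ} (a : EuclideanSpace ℝ (Fin k)) (i : Fin k) : |a i| ≤ ‖a‖ := by
  rw [EuclideanSpace.norm_eq, ← Real.sqrt_sq_eq_abs]
  apply Real.sqrt_le_sqrt
  have : (a i)^2 ≤ ∑ j, ‖a j‖^2 := by
    have := Finset.single_le_sum (f := fun j => ‖a j‖^2)
      (fun j _ => sq_nonneg ‖a j‖) (Finset.mem_univ i)
    simpa [Real.norm_eq_abs, sq_abs] using this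
  exact this

lemma sq_norm_euclidean {k : ℕ} (a : EuclideanSpace ℝ (Fin k)) : ‖a‖^2 = ∑ j, (a j)^2 := by
  rw [EuclideanSpace.norm_eq, Real.sq_sqrt (Finset.sum_nonneg fun j _ => sq_nonneg _)]
  simp [Real.norm_eq_abs, sq_abs]

end Pi

open Topology

/-- The standard symmetric bilinear form of signature `(p,q)` on `ℝⁿ`, `n = p + q`. -/
noncomputable def formB (p q : ℕ) (v w : Fin (p + q) → ℝ) : ℝ :=
  ∑ i : Fin (p + q), (if (i : ℕ) < p then -(v i * w i) else v i * w i)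

section Glue

variable {p q : ℕ}

/-- First block of coordinates, as a Euclidean vector. -/
def gA (p q : ℕ) (v : Fin (p + q) → ℝ) : EuclideanSpace ℝ (Fin p) :=
  WithLp.toLp 2 (fun i => v (Fin.castAdd q i))

/-- Second block of coordinates, as a Euclidean vector. -/
def gB (p q : ℕ) (v : Fin (p + q) → ℝ) : EuclideanSpace ℝ (Fin q) :=
  WithLp.toLp 2 (fun j => v (Fin.natAdd p j))

/-- Reassembling a vector from its two blocks. -/
def gInv (p q : ℕ) (z : EuclideanSpace ℝ (Fin p) × EuclideanSpace ℝ (Fin q)) :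
    Fin (p + q) → ℝ :=
  fun i => if h : (i : ℕ) < p then z.1 ⟨i, h⟩ else z.2 ⟨(i : ℕ) - p, by have := i.isLt; omega⟩

lemma gA_cont : Continuous (gA p q) :=
  (PiLp.continuous_toLp 2 _).comp (continuous_pi fun i => continuous_apply _)

lemma gB_cont : Continuous (gB p q) :=
  (PiLp.continuous_toLp 2 _).comp (continuous_pi fun j => continuous_apply _)

lemma gInv_cont : Continuous (gInv p q) := by
  apply continuous_pi
  intro i
  unfold gInv
  by_cases h : (i : ℕ) < p
  · simp only [dif_pos h]
    exact (continuous_apply _).comp ((PiLp.continuous_ofLp 2 _).comp continuous_fst)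
  · simp only [dif_neg h]
    exact (continuous_apply _).comp ((PiLp.continuous_ofLp 2 _).comp continuous_snd)

lemma gInv_g (v : Fin (p + q) → ℝ) : gInv p q (gA p q v, gB p q v) = v := by
  funext i
  unfold gInv gA gB
  by_cases h : (i : ℕ) < p
  · simp only [dif_pos h]
    exact congrArg v (Fin.ext rfl)
  · simp only [dif_neg h]
    refine congrArg v (Fin.ext ?_)
    have := i.isLt
    simp only [Fin.coe_natAdd]
    omega

lemma g_gInv (z : EuclideanSpace ℝ (Fin p) × EuclideanSpace ℝ (Fin q)) :
    (gA p q (gInv p q z), gB p q (gInv p q z)) = z := by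
  have h1 : gA p q (gInv p q z) = z.1 := by
    ext i
    unfold gA gInv
    simp only [WithLp.ofLp_toLp]
    have h : ((Fin.castAdd q i : Fin (p + q)) : ℕ) < p := by simp [i.isLt]
    simp only [dif_pos h]
    rfl
  have h2 : gB p q (gInv p q z) = z.2 := by
    ext j
    unfold gB gInv
    simp only [WithLp.ofLp_toLp]
    have h : ¬ ((Fin.natAdd p j : Fin (p + q)) : ℕ) < p := by simp
    simp only [dif_neg h]
    exact congrArg z.2 (Fin.ext (by simp))
  rw [h1, h2]

lemma formB_eq (v : Fin (p + q) → ℝ) :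
    formB p q v v = ‖gB p q v‖ ^ 2 - ‖gA p q v‖ ^ 2 := by
  rw [sq_norm_euclidean, sq_norm_euclidean]
  unfold formB gA gB
  rw [Fin.sum_univ_add (f := fun i : Fin (p + q) =>
    if (i : ℕ) < p then -(v i * v i) else v i * v i)]
  have hnat : ∀ j : Fin q, ¬ ((Fin.natAdd p j : Fin (p + q)) : ℕ) < p := fun j => by simp
  have hcast : ∀ i : Fin p, ((Fin.castAdd q i : Fin (p + q)) : ℕ) < p := fun i => by
    simp [i.isLt]
  simp only [WithLp.ofLp_toLp, if_pos (hcast _), if_neg (hnat _)]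
  rw [Finset.sum_neg_distrib]
  simp only [pow_two]
  ring

lemma formB_cont : Continuous (fun v : Fin (p + q) → ℝ => formB p q v v) := by
  unfold formB
  apply continuous_finset_sum
  intro i _
  by_cases h : (i : ℕ) < p
  · simp only [if_pos h]
    exact ((continuous_apply i).mul (continuous_apply i)).neg
  · simp only [if_neg h]
    exact (continuous_apply i).mul (continuous_apply i)

lemma sphere_conn {k : ℕ} (hk : 2 ≤ k) :
    IsConnected (Metric.sphere (0 : EuclideanSpace ℝ (Fin k)) 1) := by
  apply isConnected_sphere _ _ zero_le_one
  rw [← Module.finrank_eq_rank]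
  rw [finrank_euclideanSpace_fin]
  exact_mod_cast hk

lemma coords_small {ε : ℝ} (hε : 0 < ε) (v x : Fin (p + q) → ℝ)
    (h1 : ‖gA p q v - gA p q x‖ < ε) (h2 : ‖gB p q v - gB p q x‖ < ε) :
    dist v x < ε := by
  rw [dist_pi_lt_iff hε]
  intro i
  rw [Real.dist_eq]
  by_cases h : (i : ℕ) < p
  · have : v i - x i = (gA p q v - gA p q x) ⟨i, h⟩ := by
      show _ = gA p q v ⟨i, h⟩ - gA p q x ⟨i, h⟩
      unfold gA
      congr 1 <;> · simp only [WithLp.ofLp_toLp]; congr 1; ext; simp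
    rw [this]
    exact lt_of_le_of_lt (coord_le_norm _ _) h1
  · have hj : (i : ℕ) - p < q := by have := i.isLt; omega
    have : v i - x i = (gB p q v - gB p q x) ⟨(i : ℕ) - p, hj⟩ := by
      show _ = gB p q v ⟨(i : ℕ) - p, hj⟩ - gB p q x ⟨(i : ℕ) - p, hj⟩
      unfold gB
      congr 1 <;> · simp only [WithLp.ofLp_toLp]; congr 1; ext; simp; omega
    rw [this]
    exact lt_of_le_of_lt (coord_le_norm _ _) h2

end Glue

/-- For `p, q ≥ 2`, the open cones `U_S = {q > 0}` and `U_T = {q < 0}` are locally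
connected relative to `ℝⁿ`: every point of their closures has a fundamental system of
neighborhoods `V` with connected trace on the cone. -/
theorem cones_locally_connected_rel (p q : ℕ) (hp : 2 ≤ p) (hq : 2 ≤ q) :
    (∀ x ∈ closure {v : Fin (p + q) → ℝ | formB p q v v > 0},
      ∀ W ∈ 𝓝 x, ∃ V ∈ 𝓝 x, V ⊆ W ∧
        IsConnected (V ∩ {v : Fin (p + q) → ℝ | formB p q v v > 0})) ∧
    (∀ x ∈ closure {v : Fin (p + q) → ℝ | formB p q v v < 0},
      ∀ W ∈ 𝓝 x, ∃ V ∈ 𝓝 x, V ⊆ W ∧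
        IsConnected (V ∩ {v : Fin (p + q) → ℝ | formB p q v v < 0})) := by
  have hclos_pos : closure {v : Fin (p + q) → ℝ | formB p q v v > 0} ⊆
      {v | 0 ≤ formB p q v v} :=
    closure_minimal (fun v hv => show 0 ≤ formB p q v v from le_of_lt hv)
      (isClosed_le continuous_const formB_cont)
  have hclos_neg : closure {v : Fin (p + q) → ℝ | formB p q v v < 0} ⊆
      {v | formB p q v v ≤ 0} :=
    closure_minimal (fun v hv => show formB p q v v ≤ 0 from le_of_lt hv)
      (isClosed_le formB_cont continuous_const)
  have hsetS : {v : Fin (p + q) → ℝ | formB p q v v > 0} =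
      (fun v => (gA p q v, gB p q v)) ⁻¹'
        {z : EuclideanSpace ℝ (Fin p) × EuclideanSpace ℝ (Fin q) | ‖z.1‖ < ‖z.2‖} := by
    ext v
    simp only [mem_setOf_eq, mem_preimage]
    rw [formB_eq]
    constructor
    · intro h
      nlinarith [norm_nonneg (gA p q v), norm_nonneg (gB p q v)]
    · intro h
      nlinarith [norm_nonneg (gA p q v), norm_nonneg (gB p q v)]
  have hsetT : {v : Fin (p + q) → ℝ | formB p q v v < 0} =
      (fun v => (gB p q v, gA p q v)) ⁻¹'
        {z : EuclideanSpace ℝ (Fin q) × EuclideanSpace ℝ (Fin p) | ‖z.1‖ < ‖z.2‖} := by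
    ext v
    simp only [mem_setOf_eq, mem_preimage]
    rw [formB_eq]
    constructor
    · intro h
      nlinarith [norm_nonneg (gA p q v), norm_nonneg (gB p q v)]
    · intro h
      nlinarith [norm_nonneg (gA p q v), norm_nonneg (gB p q v)]
  constructor
  · intro x hx W hW
    rw [hsetS]
    have hxle : ‖gA p q x‖ ≤ ‖gB p q x‖ := by
      have h0 := hclos_pos hx
      simp only [mem_setOf_eq, formB_eq] at h0
      nlinarith [norm_nonneg (gA p q x), norm_nonneg (gB p q x)]
    obtain ⟨ε, hε, hball⟩ := Metric.mem_nhds_iff.1 hW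
    exact transfer_lemma (sphere_conn hq) (fun v => (gA p q v, gB p q v))
      (gInv p q) (gA_cont.prodMk gB_cont) gInv_cont
      (fun v => gInv_g v) (fun z => g_gInv z) x hxle W
      ⟨ε, hε, fun v h1 h2 => hball (mem_ball_iff_norm.2 (by
        rw [show v - x = v - x from rfl]
        have := coords_small hε v x h1 h2
        rwa [dist_eq_norm] at this))⟩
  · intro x hx W hW
    rw [hsetT]
    have hxle : ‖gB p q x‖ ≤ ‖gA p q x‖ := by
      have h0 := hclos_neg hx
      simp only [mem_setOf_eq, formB_eq] at h0
      nlinarith [norm_nonneg (gA p q x), norm_nonneg (gB p q x)]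
    obtain ⟨ε, hε, hball⟩ := Metric.mem_nhds_iff.1 hW
    exact transfer_lemma (sphere_conn hp) (fun v => (gB p q v, gA p q v))
      (fun z => gInv p q (z.2, z.1))
      (gB_cont.prodMk gA_cont) (gInv_cont.comp (continuous_snd.prodMk continuous_fst))
      (fun v => gInv_g v) (fun z => by
        have h := g_gInv (p := p) (q := q) (z.2, z.1)
        have h1 : gA p q (gInv p q (z.2, z.1)) = z.2 := congrArg Prod.fst h
        have h2 : gB p q (gInv p q (z.2, z.1)) = z.1 := congrArg Prod.snd h
        show (gB p q (gInv p q (z.2, z.1)), gA p q (gInv p q (z.2, z.1))) = z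
        rw [h1, h2]) x hxle W
      ⟨ε, hε, fun v h1 h2 => hball (mem_ball_iff_norm.2 (by
        have := coords_small hε v x h2 h1
        rwa [dist_eq_norm] at this))⟩
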